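/- Let U ⊆ Π_n be the upwards closed set of partitions of {1,...,n} having at least one block of size ≥ k (for 2 ≤ k ≤ n), and let J_{U₀} be the set of joins of atoms of U together with the bottom element 0̂. Then J_{U₀} equals the subposet Π_{(k,1^{n−k})} of Π_n consisting of all partitions each of whose blocks is either a singleton or has size ≥ k; moreover, for T ∈ J_{U₀} with blocks of sizes t₁,...,t_ℓ, the lower interval J_{U₀}^{≤T} is isomorphic as a poset to the product ∏_{i=1}^ℓ Π_{(k,1^{t_i−k})}. -/

import Mathlib

set_option linter.deprecated false

/-- The size of the block of `x` in the partition (equivalence relation) `r`. -/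
noncomputable def blockSize {n : ℕ} (r : Setoid (Fin n)) (x : Fin n) : ℕ :=
  Nat.card {y : Fin n // r.r x y}

/-- The set of partitions of `{1,...,n}` having at least one block of size `≥ k`:
an upwards closed subset `U` of the partition lattice `Π_n`. -/
def bigBlock (n k : ℕ) : Set (Setoid (Fin n)) :=
  {r | ∃ x : Fin n, k ≤ blockSize r x}

/-- The subposet `Π_{(k,1^{m-k})}` of the partition lattice of a finite type `α`:
partitions each of whose blocks is either a singleton or has size `≥ k`. -/
def kEqualsPartitions (α : Type) (k : ℕ) : Set (Setoid α) :=
  {r | ∀ x : α, Nat.card {y : α // r.r x y} = 1 ∨ k ≤ Nat.card {y : α // r.r x y}}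

/-- An atom of the upwards closed set `U ⊆ Π_n`: a minimal element of `U`. -/
def isAtomOf {n : ℕ} (U : Set (Setoid (Fin n))) (a : Setoid (Fin n)) : Prop :=
  a ∈ U ∧ ∀ b ∈ U, b ≤ a → b = a

/-- `J_{U₀}`: the set of all joins of sets of atoms of `U` (the empty join being the
bottom element `0̂`, the partition into singletons). -/
def joinClosure {n : ℕ} (U : Set (Setoid (Fin n))) : Set (Setoid (Fin n)) :=
  {r | ∃ A : Set (Setoid (Fin n)), (∀ a ∈ A, isAtomOf U a) ∧ r = sSup A}

namespace KEqAux

variable {α : Type}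

/-- Block size of `x` in `r`, for a general type. -/
noncomputable def bsize (r : Setoid α) (x : α) : ℕ := Nat.card {y : α // r.r x y}

lemma mem_kEquals_iff {k : ℕ} {r : Setoid α} :
    r ∈ kEqualsPartitions α k ↔ ∀ x, bsize r x = 1 ∨ k ≤ bsize r x := Iff.rfl

lemma two_le_bsize [Finite α] {r : Setoid α} {x y : α} (h : r.r x y) (hxy : y ≠ x) :
    2 ≤ bsize r x := by
  have : Nontrivial {z : α // r.r x z} :=
    ⟨⟨⟨y, h⟩, ⟨x, r.refl' x⟩, by simp [Subtype.ext_iff, hxy]⟩⟩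
  exact Finite.one_lt_card_iff_nontrivial.mpr this

lemma bsize_eq_of_rel {r : Setoid α} {x y : α} (h : r.r x y) :
    bsize r x = bsize r y :=
  Nat.card_congr (Equiv.subtypeEquivRight fun z =>
    ⟨fun hz => r.trans' (r.symm' h) hz, fun hz => r.trans' h hz⟩)

lemma bsize_le_of_le [Finite α] {r s : Setoid α} (h : r ≤ s) (x : α) :
    bsize r x ≤ bsize s x := by
  apply Nat.card_le_card_of_injective
    (fun z : {y : α // r.r x y} => (⟨z.1, Setoid.le_def.mp h z.2⟩ : {y : α // s.r x y}))
  intro a b hab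
  have hv := congrArg Subtype.val hab
  exact Subtype.ext hv

lemma eq_of_bsize_eq_one {r : Setoid α} {x y : α} (h1 : bsize r x = 1)
    (h : r.r x y) : y = x := by
  obtain ⟨hs, -⟩ := Nat.card_eq_one_iff_unique.mp h1
  exact congrArg Subtype.val (hs.allEq ⟨y, h⟩ ⟨x, r.refl' x⟩)

/-- The partition with one block `S` and all other blocks singletons. -/
def blockSetoid (S : Set α) : Setoid α :=
  ⟨fun u v => u = v ∨ (u ∈ S ∧ v ∈ S),
   ⟨fun _ => Or.inl rfl,
    fun h => h.elim (fun e => Or.inl e.symm) (fun h => Or.inr ⟨h.2, h.1⟩),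
    fun h1 h2 => by
      rcases h1 with rfl | h1
      · exact h2
      · rcases h2 with rfl | h2
        · exact Or.inr h1
        · exact Or.inr ⟨h1.1, h2.2⟩⟩⟩

lemma blockSetoid_rel {S : Set α} {u v : α} :
    (blockSetoid S).r u v ↔ u = v ∨ (u ∈ S ∧ v ∈ S) := Iff.rfl

lemma bsize_blockSetoid_mem {S : Set α} {x : α} (hx : x ∈ S) :
    bsize (blockSetoid S) x = Nat.card S :=
  Nat.card_congr (Equiv.subtypeEquivRight fun y =>
    ⟨fun h => h.elim (fun e => e ▸ hx) And.right, fun h => Or.inr ⟨hx, h⟩⟩)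

lemma bsize_blockSetoid_not_mem {S : Set α} {x : α} (hx : x ∉ S) :
    bsize (blockSetoid S) x = 1 := by
  refine Nat.card_eq_one_iff_unique.mpr ⟨⟨fun a b => Subtype.ext ?_⟩, ⟨⟨x, Or.inl rfl⟩⟩⟩
  have ha := a.2; have hb := b.2
  rcases ha with ha | ha
  · rcases hb with hb | hb
    · exact ha.symm.trans hb
    · exact absurd hb.1 hx
  · exact absurd ha.1 hx

end KEqAux

open KEqAux

section Main

variable {n k : ℕ}

lemma atom_kEquals (hk2 : 2 ≤ k) {a : Setoid (Fin n)} (ha : isAtomOf (bigBlock n k) a) :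
    a ∈ kEqualsPartitions (Fin n) k := by
  obtain ⟨⟨x₀, hx₀⟩, hmin⟩ := ha
  set S : Set (Fin n) := {y | a.r x₀ y} with hS
  have hcard : Nat.card S = blockSize a x₀ := rfl
  have hbS : blockSetoid S ≤ a := by
    rw [Setoid.le_def]
    intro u v h
    rcases h with rfl | ⟨hu, hv⟩
    · exact a.refl' u
    · exact a.trans' (a.symm' hu) hv
  have hmem : blockSetoid S ∈ bigBlock n k := by
    refine ⟨x₀, ?_⟩
    have h1 : blockSize (blockSetoid S) x₀ = Nat.card S :=
      bsize_blockSetoid_mem (a.refl' x₀)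
    rw [h1, hcard]; exact hx₀
  have heq : blockSetoid S = a := hmin _ hmem hbS
  intro x
  by_cases hx : x ∈ S
  · right
    have h1 : blockSize a x = Nat.card S := by
      rw [← heq]; exact bsize_blockSetoid_mem hx
    rw [show (Nat.card {y : Fin n // a.r x y}) = blockSize a x from rfl, h1, hcard]
    exact hx₀
  · left
    have h1 : blockSize a x = 1 := by
      rw [← heq]; exact bsize_blockSetoid_not_mem hx
    exact h1

lemma blockSetoid_atom (hk2 : 2 ≤ k) {S : Set (Fin n)} (hS : S.ncard = k) :
    isAtomOf (bigBlock n k) (blockSetoid S) := by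
  have hScard : Nat.card S = k := by rw [Nat.card_coe_set_eq, hS]
  have hne : S.Nonempty := Set.nonempty_of_ncard_ne_zero (by omega)
  obtain ⟨x₀, hx₀⟩ := hne
  constructor
  · exact ⟨x₀, by rw [show blockSize (blockSetoid S) x₀ = Nat.card S from
      bsize_blockSetoid_mem hx₀, hScard]⟩
  · rintro b ⟨x₁, hx₁⟩ hle
    have hx₁S : x₁ ∈ S := by
      by_contra hx
      have h1 : blockSize (blockSetoid S) x₁ = 1 := bsize_blockSetoid_not_mem hx
      have h2 := bsize_le_of_le hle x₁
      rw [show bsize (blockSetoid S) x₁ = blockSize (blockSetoid S) x₁ from rfl, h1] at h2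
      have h3 : k ≤ bsize b x₁ := hx₁
      omega
    set B : Set (Fin n) := {y | b.r x₁ y} with hB
    have hBS : B ⊆ S := by
      intro y hy
      rcases Setoid.le_def.mp hle hy with rfl | ⟨_, h2⟩
      · exact hx₁S
      · exact h2
    have hBcard : k ≤ B.ncard := by
      rw [← Nat.card_coe_set_eq]; exact hx₁
    have hBeq : B = S := Set.eq_of_subset_of_ncard_le hBS (by omega)
    have hge : blockSetoid S ≤ b := by
      rw [Setoid.le_def]
      intro u v h
      rcases h with rfl | ⟨hu, hv⟩
      · exact b.refl' u
      · rw [← hBeq] at hu hv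
        exact b.trans' (b.symm' hu) hv
    exact le_antisymm hle hge

lemma eqvGen_ne {R : Fin n → Fin n → Prop} {x y : Fin n} (h : Relation.EqvGen R x y) :
    x = y ∨ ∃ u v, u ≠ v ∧ R u v ∧ Relation.EqvGen R x u := by
  induction h with
  | rel u v h =>
    by_cases huv : u = v
    · exact Or.inl huv
    · exact Or.inr ⟨u, v, huv, h, Relation.EqvGen.refl u⟩
  | refl => exact Or.inl rfl
  | symm p q h ih =>
    rcases ih with rfl | ⟨u, v, h1, h2, h3⟩
    · exact Or.inl rfl
    · exact Or.inr ⟨u, v, h1, h2, Relation.EqvGen.trans _ _ _ (Relation.EqvGen.symm _ _ h) h3⟩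
  | trans p q s h1 h2 ih1 ih2 =>
    rcases ih1 with rfl | ⟨u, v, hu1, hu2, hu3⟩
    · exact ih2
    · exact Or.inr ⟨u, v, hu1, hu2, hu3⟩

lemma partA (hk2 : 2 ≤ k) :
    joinClosure (bigBlock n k) = kEqualsPartitions (Fin n) k := by
  ext r
  constructor
  · rintro ⟨A, hA, rfl⟩
    intro x
    by_cases h1 : bsize (sSup A) x = 1
    · exact Or.inl h1
    right
    haveI hnonempty : Nonempty {y : Fin n // (sSup A).r x y} := ⟨⟨x, (sSup A).refl' x⟩⟩
    have hpos : 0 < bsize (sSup A) x := Nat.card_pos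
    have hlt : 1 < bsize (sSup A) x := by
      rcases Nat.lt_or_ge 1 (bsize (sSup A) x) with h | h
      · exact h
      · omega
    haveI hnt : Nontrivial {y : Fin n // (sSup A).r x y} :=
      Finite.one_lt_card_iff_nontrivial.mp hlt
    obtain ⟨z, hz⟩ := exists_ne (⟨x, (sSup A).refl' x⟩ : {y : Fin n // (sSup A).r x y})
    obtain ⟨z1, hrel⟩ := z
    have hzx : z1 ≠ x := fun h => hz (Subtype.ext h)
    have hrel' : Relation.EqvGen (fun u v => ∃ a : Setoid (Fin n), a ∈ A ∧ a u v) x z1 := by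
      rw [Setoid.sSup_eq_eqvGen] at hrel; exact hrel
    rcases eqvGen_ne hrel' with heq | ⟨u, v, huv, ⟨a, haA, hauv⟩, hchain⟩
    · exact absurd heq.symm hzx
    have hax : a ≤ sSup A := le_sSup haA
    have hxu : (sSup A).r x u := by
      rw [Setoid.sSup_eq_eqvGen]; exact hchain
    have h2 : 2 ≤ bsize a u := two_le_bsize hauv (Ne.symm huv)
    have hk : k ≤ bsize a u := by
      rcases atom_kEquals hk2 (hA a haA) u with h | h
      · rw [show bsize a u = Nat.card {y : Fin n // a.r u y} from rfl] at h2
        omega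
      · exact h
    calc k ≤ bsize a u := hk
      _ ≤ bsize (sSup A) u := bsize_le_of_le hax u
      _ = bsize (sSup A) x := (bsize_eq_of_rel hxu).symm
  · intro hr
    refine ⟨{a | isAtomOf (bigBlock n k) a ∧ a ≤ r}, fun a ha => ha.1, ?_⟩
    apply le_antisymm
    · rw [Setoid.le_def]
      intro x y hxy
      rcases eq_or_ne x y with rfl | hne
      · exact Setoid.refl' _ x
      have hbs : k ≤ bsize r x := by
        rcases hr x with h | h
        · exact absurd (eq_of_bsize_eq_one h hxy).symm hne
        · exact h
      set B : Set (Fin n) := {z | r.r x z} with hB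
      have hxB : x ∈ B := r.refl' x
      have hyB : y ∈ B := hxy
      have hBcard : k ≤ B.ncard := by rw [← Nat.card_coe_set_eq]; exact hbs
      have hsub : ({x, y} : Set (Fin n)) ⊆ B := by
        intro z hz
        rcases hz with rfl | hz
        · exact hxB
        · rw [Set.mem_singleton_iff] at hz; subst hz; exact hyB
      have hpair : ({x, y} : Set (Fin n)).ncard ≤ k := by
        rw [Set.ncard_pair hne]; exact hk2
      obtain ⟨S, hS1, hS2, hS3⟩ := Set.exists_subsuperset_card_eq hsub hpair hBcard
      have hatom := blockSetoid_atom hk2 hS3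
      have hler : blockSetoid S ≤ r := by
        rw [Setoid.le_def]
        intro u v h
        rcases h with rfl | ⟨hu, hv⟩
        · exact r.refl' u
        · exact r.trans' (r.symm' (hS2 hu)) (hS2 hv)
      have hxyS : (blockSetoid S).r x y :=
        Or.inr ⟨hS1 (by left; rfl), hS1 (by right; rfl)⟩
      exact Setoid.le_def.mp (le_sSup (show _ ∈ {a | isAtomOf (bigBlock n k) a ∧ a ≤ r}
        from ⟨hatom, hler⟩)) hxyS
    · exact sSup_le fun a ha => ha.2

end Main

section Part2

variable {n : ℕ} (T : Setoid (Fin n))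

/-- Glue a family of partitions of the blocks of `T` into a partition of `Fin n`. -/
def glue (s : ∀ c : Quotient T, Setoid {x : Fin n // (⟦x⟧ : Quotient T) = c}) :
    Setoid (Fin n) :=
  ⟨fun x y => ∃ (c : Quotient T) (x' y' : {z : Fin n // (⟦z⟧ : Quotient T) = c}),
      x'.1 = x ∧ y'.1 = y ∧ (s c).r x' y',
   ⟨fun x => ⟨⟦x⟧, ⟨x, rfl⟩, ⟨x, rfl⟩, rfl, rfl, (s _).refl' _⟩,
    by
      rintro x y ⟨c, x', y', hx, hy, h⟩
      exact ⟨c, y', x', hy, hx, (s c).symm' h⟩,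
    by
      rintro x y z ⟨c, x', y', hx, hy, h⟩ ⟨c', y'', z', hy', hz, h'⟩
      have hc : c = c' := by rw [← y'.2, hy, ← hy']; exact y''.2
      subst hc
      have hyy : y'' = y' := Subtype.ext (hy'.trans hy.symm)
      subst hyy
      exact ⟨c, x', z', hx, hz, (s c).trans' h h'⟩⟩⟩

lemma glue_rel_iff (s : ∀ c : Quotient T, Setoid {x : Fin n // (⟦x⟧ : Quotient T) = c})
    {c : Quotient T} (x' y' : {z : Fin n // (⟦z⟧ : Quotient T) = c}) :
    (glue T s).r x'.1 y'.1 ↔ (s c).r x' y' := by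
  constructor
  · rintro ⟨c'', x'', y'', hx, hy, h⟩
    have hc : c'' = c := by rw [← x''.2, hx]; exact x'.2
    subst hc
    have h1 : x'' = x' := Subtype.ext hx
    have h2 : y'' = y' := Subtype.ext hy
    subst h1; subst h2
    exact h
  · intro h
    exact ⟨c, x', y', rfl, rfl, h⟩

lemma glue_le (s : ∀ c : Quotient T, Setoid {x : Fin n // (⟦x⟧ : Quotient T) = c}) :
    glue T s ≤ T := by
  rw [Setoid.le_def]
  rintro x y ⟨c, x', y', hx, hy, h⟩
  have hxy : (⟦x⟧ : Quotient T) = ⟦y⟧ := by rw [← hx, ← hy, x'.2, y'.2]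
  exact Quotient.exact hxy

lemma glue_comap (s : ∀ c : Quotient T, Setoid {x : Fin n // (⟦x⟧ : Quotient T) = c})
    (c : Quotient T) :
    Setoid.comap Subtype.val (glue T s) = s c :=
  Setoid.ext fun x' y' => glue_rel_iff T s x' y'

lemma glue_comap_self {r : Setoid (Fin n)} (hle : r ≤ T) :
    glue T (fun _ => Setoid.comap Subtype.val r) = r := by
  apply Setoid.ext
  intro x y
  constructor
  · rintro ⟨c, x', y', hx, hy, h⟩
    have h' : r.r x'.1 y'.1 := h
    rwa [hx, hy] at h'
  · intro h
    have hxy : (⟦y⟧ : Quotient T) = ⟦x⟧ := (Quotient.sound (Setoid.le_def.mp hle h)).symm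
    exact ⟨⟦x⟧, ⟨x, rfl⟩, ⟨y, hxy⟩, rfl, rfl, h⟩

lemma glue_mono {s s' : ∀ c : Quotient T, Setoid {x : Fin n // (⟦x⟧ : Quotient T) = c}}
    (h : ∀ c, s c ≤ s' c) : glue T s ≤ glue T s' := by
  rw [Setoid.le_def]
  rintro x y ⟨c, x', y', hx, hy, hrel⟩
  exact ⟨c, x', y', hx, hy, Setoid.le_def.mp (h c) hrel⟩

/-- The block of `x'` in the restriction of `r ≤ T` to a block of `T` is the block
of `x'` in `r`. -/
noncomputable def blockRestrictEquiv {r : Setoid (Fin n)} (hle : r ≤ T) {c : Quotient T}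
    (x' : {z : Fin n // (⟦z⟧ : Quotient T) = c}) :
    {y' : {z : Fin n // (⟦z⟧ : Quotient T) = c} //
        (Setoid.comap Subtype.val r).r x' y'} ≃ {y : Fin n // r.r x'.1 y} where
  toFun p := ⟨p.1.1, p.2⟩
  invFun p := ⟨⟨p.1,
      ((Quotient.sound (Setoid.le_def.mp hle p.2)).symm).trans x'.2⟩, p.2⟩
  left_inv p := Subtype.ext (Subtype.ext rfl)
  right_inv p := rfl

lemma bsize_comap {r : Setoid (Fin n)} (hle : r ≤ T) {c : Quotient T}
    (x' : {z : Fin n // (⟦z⟧ : Quotient T) = c}) :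
    bsize (Setoid.comap Subtype.val r) x' = bsize r x'.1 :=
  Nat.card_congr (blockRestrictEquiv T hle x')

lemma bsize_glue (s : ∀ c : Quotient T, Setoid {x : Fin n // (⟦x⟧ : Quotient T) = c})
    (x : Fin n) :
    bsize (glue T s) x = bsize (s ⟦x⟧) ⟨x, rfl⟩ := by
  have h1 : bsize (Setoid.comap Subtype.val (glue T s)) (⟨x, rfl⟩ :
      {z : Fin n // (⟦z⟧ : Quotient T) = ⟦x⟧}) = bsize (glue T s) x :=
    bsize_comap T (glue_le T s) _
  rw [← h1, glue_comap T s ⟦x⟧]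

end Part2

/-- Let `U ⊆ Π_n` be the upwards closed set of partitions of `{1,...,n}` with at
least one block of size `≥ k` (`2 ≤ k ≤ n`), and let `J_{U₀}` be the set of joins of
atoms of `U` together with the bottom element. Then `J_{U₀}` equals the subposet
`Π_{(k,1^{n-k})}` of partitions all of whose blocks are singletons or of size `≥ k`;
moreover, for `T ∈ J_{U₀}`, the lower interval `J_{U₀}^{≤ T}` is isomorphic as a
poset to the product, over the blocks `c` of `T` (of sizes `t_i`), of the posets
`Π_{(k,1^{t_i-k})}` of such partitions of the blocks. -/
theorem kEquals_join_closure (n k : ℕ) (hk2 : 2 ≤ k) (hkn : k ≤ n) :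
    joinClosure (bigBlock n k) = kEqualsPartitions (Fin n) k ∧
    ∀ T : Setoid (Fin n), T ∈ joinClosure (bigBlock n k) →
      Nonempty
        (({r : Setoid (Fin n) // r ∈ joinClosure (bigBlock n k) ∧ r ≤ T}) ≃o
          (∀ c : Quotient T,
            {s : Setoid {x : Fin n // (⟦x⟧ : Quotient T) = c} //
              s ∈ kEqualsPartitions {x : Fin n // (⟦x⟧ : Quotient T) = c} k})) := by
  have hA := partA (n := n) hk2
  refine ⟨hA, fun T _ => ⟨?_⟩⟩
  refine ⟨⟨fun r c => ⟨Setoid.comap Subtype.val r.1, ?_⟩,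
          fun s => ⟨glue T (fun c => (s c).1), ?_, glue_le T _⟩, ?_, ?_⟩, ?_⟩
  · -- membership of restriction
    intro x'
    rw [show (Nat.card {y // (Setoid.comap Subtype.val r.1).r x' y}) =
        bsize (Setoid.comap Subtype.val r.1) x' from rfl, bsize_comap T r.2.2 x']
    have hr : r.1 ∈ kEqualsPartitions (Fin n) k := by rw [← hA]; exact r.2.1
    exact hr x'.1
  · -- glue is in the join closure
    rw [hA]
    intro x
    rw [show (Nat.card {y // (glue T (fun c => (s c).1)).r x y}) =
        bsize (glue T (fun c => (s c).1)) x from rfl, bsize_glue T _ x]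
    exact (s ⟦x⟧).2 ⟨x, rfl⟩
  · -- left inverse
    intro r
    exact Subtype.ext (glue_comap_self T r.2.2)
  · -- right inverse
    intro s
    funext c
    exact Subtype.ext (glue_comap T (fun c => (s c).1) c)
  · -- order iso
    intro r r'
    constructor
    · intro h
      have h1 : glue T (fun c => Setoid.comap Subtype.val r.1) ≤
          glue T (fun c => Setoid.comap Subtype.val r'.1) := glue_mono T fun c => h c
      rwa [glue_comap_self T r.2.2, glue_comap_self T r'.2.2] at h1
    · intro h c
      show Setoid.comap Subtype.val r.1 ≤ Setoid.comap Subtype.val r'.1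
      rw [Setoid.le_def]
      intro x y hxy
      exact Setoid.le_def.mp h hxy
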